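/- Let z = e^{4πi/5} and φ = (1-√5)/2. The 4×4 Hermitian matrix with ones on the diagonal, H_{12} = H_{23} = 1/(z-1), H_{34} = φ/(z-1), and all other off-diagonal entries zero (Hermitian symmetric) is positive definite. -/

import Mathlib

open Matrix
open scoped ComplexOrder

set_option maxHeartbeats 1000000

private lemma g30_posdef_conj_aux {n : Type*} [Fintype n] [DecidableEq n] {A B : Matrix n n ℂ}
    (hA : A.PosDef) (hB : IsUnit B) : (Bᴴ * A * B).PosDef := by
  rw [Matrix.posDef_iff_dotProduct_mulVec] at hA ⊢
  refine ⟨Matrix.isHermitian_conjTranspose_mul_mul B hA.1, fun x hx => ?_⟩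
  have hBx : B *ᵥ x ≠ 0 := by
    intro h
    exact hx (Matrix.mulVec_injective_iff_isUnit.2 hB (by simpa using h))
  simpa only [Matrix.star_mulVec, Matrix.dotProduct_mulVec, Matrix.vecMul_vecMul]
    using hA.2 (x := B *ᵥ x) hBx

private lemma g30_aux_factor (z c sc φ : ℂ)
    (hw : (z - 1) * (c - 1) = (5 + sc) / 2)
    (hs2c : sc ^ 2 = 5)
    (hφ2 : 2 * φ = 1 - sc)
    (h5s : (5:ℂ) + sc ≠ 0) (hs1 : sc - 1 ≠ 0) (hz1 : z - 1 ≠ 0) (hz1' : c - 1 ≠ 0) :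
    (!![1, 1/(z-1), 0, 0;
        1/(c - 1), 1, 1/(z-1), 0;
        0, 1/(c - 1), 1, φ/(z-1);
        0, 0, φ/(c-1), 1] : Matrix (Fin 4) (Fin 4) ℂ) =
    !![c-1, 0, 0, 0;
       1, (5+sc)*(c-1), 0, 0;
       0, 10, (sc-1)*(c-1), 0;
       0, 0, 1-sc, 1]
    * !![2/(5+sc), 0, 0, 0;
         0, 1/(5*(5+sc)^2), 0, 0;
         0, 0, 1/((sc-1)*(5+sc)), 0;
         0, 0, 0, (15-3*sc)/10]
    * !![z-1, 1, 0, 0;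
         0, (5+sc)*(z-1), 10, 0;
         0, 0, (sc-1)*(z-1), 1-sc;
         0, 0, 0, 1] := by
  have h5 : (5:ℂ) ≠ 0 := by norm_num
  ext i j
  fin_cases i <;> fin_cases j <;>
    simp [Matrix.mul_apply, Fin.sum_univ_four, Matrix.vecHead, Matrix.vecTail] <;>
    field_simp
  all_goals first
    | linear_combination (-2 : ℂ) * hw
    | linear_combination (-10*(5+sc)) * hw
    | linear_combination (-(5+sc)^3) * hw + (-(5+sc)^2/2) * hs2c
    | linear_combination (-5*(5+sc)^2*(sc-1)^2) * hw + (-5*(5+sc)*(sc-1)*(sc+7)/2) * hs2c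
    | linear_combination ((sc-1)*(5+sc)/2) * hφ2 + (sc-1)^2 * hw
    | linear_combination (3*(sc-1)) * hs2c
    | linear_combination (-(sc+5)) * hw + (5/2 - 3*sc) * hs2c
    | linear_combination (-10:ℂ) * hw + (3 - 3*sc) * hs2c
    | linear_combination (-5*sc^2-20*sc+25) * hw + (-(11*sc+29)/2) * hs2c
    | linear_combination (sc-1) * hw + (3-3*sc) * hs2c + ((5+sc)/2) * hφ2
    | linear_combination (-(sc+5)) * hw + (-1/2 : ℂ) * hs2c
    | linear_combination (-10:ℂ) * hw
    | linear_combination (-5*sc^2-20*sc+25) * hw + (-(5*sc+35)/2) * hs2c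
    | linear_combination (sc-1) * hw + ((5+sc)/2) * hφ2

/-- The Galois conjugate of the Hermitian form for `𝒞(G₃₀,5)`: with `z = e^{4πi/5}`
and `φ = (1-√5)/2`, the matrix is positive definite. -/
theorem g30_conjugate_form_posdef
    (z : ℂ) (hz : z = Complex.exp (4 * Real.pi * Complex.I / 5))
    (φ : ℂ) (hφ : φ = (1 - Real.sqrt 5) / 2)
    (H : Matrix (Fin 4) (Fin 4) ℂ)
    (hH : H = !![1, 1/(z-1), 0, 0;
                 1/((starRingEnd ℂ) z - 1), 1, 1/(z-1), 0;
                 0, 1/((starRingEnd ℂ) z - 1), 1, φ/(z-1);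
                 0, 0, (starRingEnd ℂ) (φ/(z-1)), 1]) :
    H.PosDef := by
  set s : ℝ := Real.sqrt 5 with hs5
  set c : ℂ := (starRingEnd ℂ) z with hc
  have hs0 : (0:ℝ) ≤ s := Real.sqrt_nonneg 5
  have hs2 : s ^ 2 = 5 := Real.sq_sqrt (by norm_num)
  have hs_gt : 2 < s := by nlinarith
  have hs_lt : s < 3 := by nlinarith
  -- the key identity
  have hw : (z - 1) * (c - 1) = (5 + (s : ℂ)) / 2 := by
    have hθ : (4 * Real.pi * Complex.I / 5) = ((4 * Real.pi / 5 : ℝ) : ℂ) * Complex.I := by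
      push_cast; ring
    have hcj : (starRingEnd ℂ) (((4 * Real.pi / 5 : ℝ) : ℂ) * Complex.I)
        = -(((4 * Real.pi / 5 : ℝ) : ℂ) * Complex.I) := by
      rw [_root_.map_mul, Complex.conj_ofReal, Complex.conj_I]; ring
    have hzz : z * c = 1 := by
      rw [hc, hz, hθ, ← Complex.exp_conj, hcj, ← Complex.exp_add, add_neg_cancel,
        Complex.exp_zero]
    have hre : (z + c) = ((2 * Real.cos (4 * Real.pi / 5) : ℝ) : ℂ) := by
      rw [hc, hz, hθ, Complex.add_conj, Complex.exp_ofReal_mul_I_re]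
    have hcos : Real.cos (4 * Real.pi / 5) = -((1 + s) / 4) := by
      have h45 : (4 : ℝ) * Real.pi / 5 = Real.pi - Real.pi / 5 := by ring
      rw [h45, Real.cos_pi_sub, Real.cos_pi_div_five]
    rw [hcos] at hre
    push_cast at hre
    linear_combination hzz - hre
  have hs2c : ((s : ℂ)) ^ 2 = 5 := by
    rw [← Complex.ofReal_pow, hs2]; norm_num
  have hφ2 : 2 * φ = 1 - (s : ℂ) := by rw [hφ]; push_cast; ring
  have h5s : (5 : ℂ) + (s:ℂ) ≠ 0 := by
    intro h
    have : ((5 + s : ℝ) : ℂ) = 0 := by push_cast; linear_combination h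
    rw [Complex.ofReal_eq_zero] at this
    linarith
  have hs1 : (s:ℂ) - 1 ≠ 0 := by
    intro h
    have : ((s - 1 : ℝ) : ℂ) = 0 := by push_cast; linear_combination h
    rw [Complex.ofReal_eq_zero] at this
    linarith
  have hz1 : z - 1 ≠ 0 := by
    intro h
    rw [h, zero_mul] at hw
    exact h5s (by linear_combination -2 * hw)
  have hz1' : c - 1 ≠ 0 := by
    intro h
    rw [h, mul_zero] at hw
    exact h5s (by linear_combination -2 * hw)
  -- conjugation of φ/(z-1)
  have hstar : (starRingEnd ℂ) (φ/(z-1)) = φ/(c-1) := by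
    rw [hφ]
    simp [map_div₀, Complex.conj_ofReal, map_ofNat, hc]
  -- the congruence decomposition
  have hfact : H = !![c-1, 0, 0, 0;
       1, (5+(s:ℂ))*(c-1), 0, 0;
       0, 10, ((s:ℂ)-1)*(c-1), 0;
       0, 0, 1-(s:ℂ), 1]
    * !![2/(5+(s:ℂ)), 0, 0, 0;
         0, 1/(5*(5+(s:ℂ))^2), 0, 0;
         0, 0, 1/(((s:ℂ)-1)*(5+(s:ℂ))), 0;
         0, 0, 0, (15-3*(s:ℂ))/10]
    * !![z-1, 1, 0, 0;
         0, (5+(s:ℂ))*(z-1), 10, 0;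
         0, 0, ((s:ℂ)-1)*(z-1), 1-(s:ℂ);
         0, 0, 0, 1] := by
    rw [hH, hstar]
    exact g30_aux_factor z c (s:ℂ) φ hw hs2c hφ2 h5s hs1 hz1 hz1'
  -- identify the left factor as the conjugate transpose of the right factor
  have hct : (!![c-1, 0, 0, 0;
       1, (5+(s:ℂ))*(c-1), 0, 0;
       0, 10, ((s:ℂ)-1)*(c-1), 0;
       0, 0, 1-(s:ℂ), 1] : Matrix (Fin 4) (Fin 4) ℂ)
      = (!![z-1, 1, 0, 0;
         0, (5+(s:ℂ))*(z-1), 10, 0;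
         0, 0, ((s:ℂ)-1)*(z-1), 1-(s:ℂ);
         0, 0, 0, 1])ᴴ := by
    ext i j
    fin_cases i <;> fin_cases j <;>
      simp [Matrix.conjTranspose_apply, hc, Complex.conj_ofReal, map_ofNat, Matrix.vecHead, Matrix.vecTail]
  -- the middle diagonal factor is positive definite
  have hEdiag : (!![2/(5+(s:ℂ)), 0, 0, 0;
         0, 1/(5*(5+(s:ℂ))^2), 0, 0;
         0, 0, 1/(((s:ℂ)-1)*(5+(s:ℂ))), 0;
         0, 0, 0, (15-3*(s:ℂ))/10] : Matrix (Fin 4) (Fin 4) ℂ)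
      = Matrix.diagonal (fun i => ((![2/(5+s), 1/(5*(5+s)^2), 1/((s-1)*(5+s)), (15-3*s)/10] : Fin 4 → ℝ) i : ℂ)) := by
    ext i j
    fin_cases i <;> fin_cases j <;>
      simp [Matrix.diagonal, Matrix.vecHead, Matrix.vecTail] <;> push_cast <;> ring
  have hEpos : (!![2/(5+(s:ℂ)), 0, 0, 0;
         0, 1/(5*(5+(s:ℂ))^2), 0, 0;
         0, 0, 1/(((s:ℂ)-1)*(5+(s:ℂ))), 0;
         0, 0, 0, (15-3*(s:ℂ))/10] : Matrix (Fin 4) (Fin 4) ℂ).PosDef := by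
    rw [hEdiag]
    apply Matrix.PosDef.diagonal
    intro i
    rw [Complex.zero_lt_real]
    fin_cases i <;> simp <;>
      first
        | positivity
        | exact mul_pos (inv_pos.2 (by linarith)) (inv_pos.2 (by linarith))
        | linarith
  -- the right factor is invertible
  have hMunit : IsUnit (!![z-1, 1, 0, 0;
         0, (5+(s:ℂ))*(z-1), 10, 0;
         0, 0, ((s:ℂ)-1)*(z-1), 1-(s:ℂ);
         0, 0, 0, 1] : Matrix (Fin 4) (Fin 4) ℂ) := by
    rw [Matrix.isUnit_iff_isUnit_det, isUnit_iff_ne_zero]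
    have hdet : (!![z-1, 1, 0, 0;
         0, (5+(s:ℂ))*(z-1), 10, 0;
         0, 0, ((s:ℂ)-1)*(z-1), 1-(s:ℂ);
         0, 0, 0, 1] : Matrix (Fin 4) (Fin 4) ℂ).det
        = (z-1) * ((5+(s:ℂ))*(z-1)) * (((s:ℂ)-1)*(z-1)) := by
      simp [Matrix.det_succ_row_zero, Fin.sum_univ_succ]
      ring
    rw [hdet]
    exact mul_ne_zero (mul_ne_zero hz1 (mul_ne_zero h5s hz1)) (mul_ne_zero hs1 hz1)
  rw [hfact, hct]
  exact g30_posdef_conj_aux hEpos hMunit
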